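/- In the interference-limited regime with Rayleigh fading, the success probability of a receiver at a point with angular sector φ_x of interferers satisfies: exp(−λ ∫_0^∞ ∫_0^{φ_x} [s g(r)/(1 + s g(r))] r dφ dr) = exp( −λ φ_x ( s/(2(1+s)) + s·₂F₁(1, (η−2)/η; (2η−2)/η; −s)/(η−2) ) ). -/

import Mathlib

open MeasureTheory Real

/-- The Gauss hypergeometric function ₂F₁(a,b;c;z), defined through Euler's integral
representation (valid for c > b > 0 and z ∉ [1,∞), in particular for all z ≤ 0). -/
noncomputable def hyp2F1 (a b c z : ℝ) : ℝ :=
  (Real.Gamma c / (Real.Gamma b * Real.Gamma (c - b))) *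
    ∫ t in Set.Ioo (0:ℝ) 1, t ^ (b - 1) * (1 - t) ^ (c - b - 1) * (1 - z * t) ^ (-a)

section Aux

/-- The radial integrand. -/
noncomputable def Fint (η s : ℝ) (r : ℝ) : ℝ :=
  s * min 1 (r ^ (-η)) / (1 + s * min 1 (r ^ (-η))) * r

lemma Fint_meas (η s : ℝ) : Measurable (Fint η s) := by
  unfold Fint
  measurability

lemma one_le_rpow_neg_of_Ioc {η r : ℝ} (hη : 0 < η) (hr : r ∈ Set.Ioc (0:ℝ) 1) :
    (1:ℝ) ≤ r ^ (-η) :=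
  Real.one_le_rpow_of_pos_of_le_one_of_nonpos hr.1 hr.2 (by linarith)

lemma Fint_eq_on_Ioc {η s r : ℝ} (hη : 0 < η) (hr : r ∈ Set.Ioc (0:ℝ) 1) :
    Fint η s r = s / (1 + s) * r := by
  unfold Fint
  rw [min_eq_left (one_le_rpow_neg_of_Ioc hη hr), mul_one]

lemma rpow_neg_eq_min_of_Ioi {η r : ℝ} (hη : 0 < η) (hr : r ∈ Set.Ioi (1:ℝ)) :
    min 1 (r ^ (-η)) = r ^ (-η) :=
  min_eq_right (Real.rpow_le_one_of_one_le_of_nonpos (le_of_lt hr) (by linarith))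

end Aux

theorem success_probability_closed_form (η lam s phix : ℝ) (hη : 2 < η) (hlam : 0 < lam)
    (hs : 0 < s) (hphi : 0 < phix) (hphi2 : phix ≤ 2 * π) :
    Real.exp (-(lam * ∫ r in Set.Ioi (0:ℝ), ∫ _φ in Set.Ioo (0:ℝ) phix,
        (s * min 1 (r ^ (-η)) / (1 + s * min 1 (r ^ (-η)))) * r))
      = Real.exp (-(lam * phix * (s / (2 * (1 + s))
          + s * hyp2F1 1 ((η - 2)/η) ((2*η - 2)/η) (-s) / (η - 2)))) := by
  have hη0 : (0:ℝ) < η := by linarith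
  have hη2 : η - 2 ≠ 0 := by linarith
  have hηne : η ≠ 0 := ne_of_gt hη0
  set b : ℝ := (η - 2) / η with hb_def
  have hb0 : 0 < b := div_pos (by linarith) hη0
  set I₂ : ℝ := ∫ t in Set.Ioo (0:ℝ) 1, t ^ (b - 1) * (1 + s * t)⁻¹ with hI2_def
  -- Step 1: inner angular integral is constant
  have hinner : ∀ r : ℝ, (∫ _φ in Set.Ioo (0:ℝ) phix,
      (s * min 1 (r ^ (-η)) / (1 + s * min 1 (r ^ (-η)))) * r) = phix * Fint η s r := by
    intro r
    rw [setIntegral_const, Real.volume_real_Ioo_of_le hphi.le, sub_zero,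
      smul_eq_mul, Fint]
  -- Step 2: value on (0,1]
  have hIoc : ∫ r in Set.Ioc (0:ℝ) 1, Fint η s r = s / (2 * (1 + s)) := by
    rw [setIntegral_congr_fun measurableSet_Ioc (fun r hr => Fint_eq_on_Ioc hη0 hr),
      integral_const_mul, ← intervalIntegral.integral_of_le zero_le_one, integral_id]
    have h1s : (1:ℝ) + s ≠ 0 := by positivity
    rw [show ((1:ℝ)^2 - 0^2)/2 = 1/2 by norm_num, div_mul_div_comm, mul_one, mul_comm]
  -- Step 3: substitution on (1,∞)
  have himg : (fun t : ℝ => t ^ (-1/η)) '' Set.Ioo 0 1 = Set.Ioi 1 := by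
    ext r
    simp only [Set.mem_image, Set.mem_Ioi, Set.mem_Ioo]
    constructor
    · rintro ⟨t, ⟨ht0, ht1⟩, rfl⟩
      exact (Real.one_lt_rpow_iff_of_pos ht0).mpr (Or.inr ⟨ht1, by
        rw [neg_div]; exact neg_neg_iff_pos.mpr (by positivity)⟩)
    · intro hr
      have hr0 : 0 < r := lt_trans one_pos hr
      refine ⟨r ^ (-η), ⟨Real.rpow_pos_of_pos hr0 _,
        Real.rpow_lt_one_of_one_lt_of_neg hr (by linarith)⟩, ?_⟩
      rw [← Real.rpow_mul hr0.le]
      rw [show (-η) * (-1/η) = 1 by field_simp]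
      exact Real.rpow_one r
  have hIoi : ∫ r in Set.Ioi (1:ℝ), Fint η s r = s / η * I₂ := by
    have hderiv : ∀ t ∈ Set.Ioo (0:ℝ) 1, HasDerivWithinAt (fun t : ℝ => t ^ (-1/η))
        ((-1/η) * t ^ (-1/η - 1)) (Set.Ioo 0 1) t := fun t ht =>
      (Real.hasDerivAt_rpow_const (Or.inl ht.1.ne')).hasDerivWithinAt
    have hinj : Set.InjOn (fun t : ℝ => t ^ (-1/η)) (Set.Ioo 0 1) := by
      refine (Real.rpow_left_injOn ?_).mono (fun t ht => le_of_lt ht.1)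
      rw [neg_div]; exact (neg_ne_zero.mpr (by positivity))
    rw [← himg, integral_image_eq_integral_abs_deriv_smul measurableSet_Ioo hderiv hinj]
    rw [show (∫ t in Set.Ioo (0:ℝ) 1, |(-1/η) * t ^ (-1/η - 1)| • Fint η s (t ^ (-1/η)))
        = ∫ t in Set.Ioo (0:ℝ) 1, s / η * (t ^ (b - 1) * (1 + s * t)⁻¹) from ?_,
      integral_const_mul]
    refine setIntegral_congr_fun measurableSet_Ioo (fun t ht => ?_)
    obtain ⟨ht0, ht1⟩ := ht
    have habs : |(-1/η) * t ^ (-1/η - 1)| = 1/η * t ^ (-1/η - 1) := by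
      rw [abs_mul, abs_of_pos (Real.rpow_pos_of_pos ht0 _), abs_div, abs_neg, abs_one,
        abs_of_pos hη0]
    have hpow : (t ^ (-1/η)) ^ (-η) = t := by
      rw [← Real.rpow_mul ht0.le, show (-1/η) * (-η) = 1 by field_simp, Real.rpow_one]
    have hFt : Fint η s (t ^ (-1/η)) = s * t * (1 + s * t)⁻¹ * t ^ (-1/η) := by
      unfold Fint
      rw [hpow, min_eq_right ht1.le, div_eq_mul_inv]
    have hmerge : t ^ (b - 1) = t ^ (-1/η - 1) * t * t ^ (-1/η) := by
      rw [show b - 1 = (-1/η - 1) + 1 + (-1/η) by rw [hb_def]; field_simp; ring,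
        Real.rpow_add ht0, Real.rpow_add ht0, Real.rpow_one]
    rw [smul_eq_mul, habs, hFt, hmerge]
    ring
  -- Step 4: integrability on the two pieces
  have hint1 : IntegrableOn (Fint η s) (Set.Ioc 0 1) := by
    refine (IntegrableOn.congr_fun ?_ (fun r hr => (Fint_eq_on_Ioc hη0 hr).symm)
      measurableSet_Ioc)
    exact (continuous_const.mul continuous_id).integrableOn_Ioc
  have hint2 : IntegrableOn (Fint η s) (Set.Ioi 1) := by
    have hmaj : IntegrableOn (fun r : ℝ => s * r ^ (1 - η)) (Set.Ioi 1) :=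
      (integrableOn_Ioi_rpow_of_lt (by linarith) one_pos).const_mul s
    refine hmaj.mono' ((Fint_meas η s).aestronglyMeasurable) ?_
    refine (ae_restrict_iff' measurableSet_Ioi).mpr (ae_of_all _ (fun r hr => ?_))
    have hr1 : (1:ℝ) < r := hr
    have hr0 : (0:ℝ) < r := lt_trans one_pos hr1
    have hm := rpow_neg_eq_min_of_Ioi hη0 hr
    have hnn : 0 ≤ Fint η s r := by
      have hm0 : 0 ≤ min 1 (r ^ (-η)) := le_min zero_le_one (Real.rpow_nonneg hr0.le _)
      have hden : 0 < 1 + s * min 1 (r ^ (-η)) := by positivity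
      unfold Fint; positivity
    rw [Real.norm_eq_abs, abs_of_nonneg hnn]
    unfold Fint
    rw [hm]
    have hp : (0:ℝ) < r ^ (-η) := Real.rpow_pos_of_pos hr0 _
    have hden : (1:ℝ) ≤ 1 + s * r ^ (-η) := by nlinarith
    have h1 : s * r ^ (-η) / (1 + s * r ^ (-η)) ≤ s * r ^ (-η) :=
      div_le_self (by positivity) hden
    calc s * r ^ (-η) / (1 + s * r ^ (-η)) * r ≤ s * r ^ (-η) * r :=
          mul_le_mul_of_nonneg_right h1 hr0.le
      _ = s * r ^ (1 - η) := by
          rw [mul_assoc, ← Real.rpow_add_one hr0.ne', neg_add_eq_sub]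
  -- Step 5: split the radial integral
  have hsplit : ∫ r in Set.Ioi (0:ℝ), Fint η s r = s / (2 * (1 + s)) + s / η * I₂ := by
    rw [← Set.Ioc_union_Ioi_eq_Ioi zero_le_one,
      setIntegral_union Set.Ioc_disjoint_Ioi_same measurableSet_Ioi hint1 hint2,
      hIoc, hIoi]
  -- Step 6: the hypergeometric value
  have hc : (2*η - 2)/η = b + 1 := by rw [hb_def]; field_simp; ring
  have hhyp : hyp2F1 1 b (b + 1) (-s) = b * I₂ := by
    unfold hyp2F1
    have hGb : Real.Gamma b ≠ 0 := ne_of_gt (Real.Gamma_pos_of_pos hb0)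
    rw [show b + 1 - b = 1 by ring, Real.Gamma_one, Real.Gamma_add_one hb0.ne', mul_one,
      mul_div_assoc, div_self hGb, mul_one]
    congr 1
    refine setIntegral_congr_fun measurableSet_Ioo (fun t ht => ?_)
    rw [show (1:ℝ) - 1 = 0 by ring, Real.rpow_zero, mul_one,
      show (1:ℝ) - (-s) * t = 1 + s * t by ring, Real.rpow_neg_one]
  -- Conclusion
  congr 1
  rw [show (∫ r in Set.Ioi (0:ℝ), ∫ _φ in Set.Ioo (0:ℝ) phix,
      (s * min 1 (r ^ (-η)) / (1 + s * min 1 (r ^ (-η)))) * r)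
      = ∫ r in Set.Ioi (0:ℝ), phix * Fint η s r from integral_congr_ae
        (ae_of_all _ (fun r => hinner r)),
    integral_const_mul, hsplit, hc, hhyp]
  have : s * (b * I₂) / (η - 2) = s / η * I₂ := by
    rw [hb_def]; field_simp
  rw [this]
  ring
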